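/- Let θ(x) = arctan(2Hx) and β(x) = √(1 + 4H²x²) for a nonzero constant H. These satisfy the compatibility equation β'' + tan(θ)·θ'·β' − β·cos²(θ) = 0 for all x if and only if H² = 1/4. -/

import Mathlib

open Real

theorem stmt_17 (H : ℝ) (hH : H ≠ 0)
    (θ β : ℝ → ℝ)
    (hθ : θ = fun x => Real.arctan (2 * H * x))
    (hβ : β = fun x => Real.sqrt (1 + 4 * H^2 * x^2)) :
    (∀ x, deriv (deriv β) x + Real.tan (θ x) * deriv θ x * deriv β x
        - β x * (Real.cos (θ x))^2 = 0) ↔ H^2 = 1/4 := by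
  subst hθ hβ
  have hc : ∀ x : ℝ, (0:ℝ) < 1 + 4*H^2*x^2 := by
    intro x; positivity
  have hsq : ∀ x : ℝ, (0:ℝ) < Real.sqrt (1 + 4*H^2*x^2) := fun x =>
    Real.sqrt_pos.mpr (hc x)
  have hg : ∀ x : ℝ, HasDerivAt (fun x : ℝ => 1 + 4*H^2*x^2) (8*H^2*x) x := by
    intro x
    have := ((hasDerivAt_pow 2 x).const_mul (4*H^2)).const_add (1:ℝ)
    convert this using 1
    all_goals first | rfl | (norm_num; ring)
  have hβ' : ∀ x, HasDerivAt (fun x => Real.sqrt (1 + 4*H^2*x^2))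
      (4*H^2*x / Real.sqrt (1+4*H^2*x^2)) x := by
    intro x
    have h2 := (Real.hasDerivAt_sqrt (ne_of_gt (hc x))).comp x (hg x)
    convert h2 using 1
    all_goals try rfl
    field_simp
    ring
  have hdβ : deriv (fun x => Real.sqrt (1 + 4*H^2*x^2))
      = fun x => 4*H^2*x / Real.sqrt (1+4*H^2*x^2) := by
    funext x; exact (hβ' x).deriv
  have hβ'' : ∀ x, deriv (deriv (fun x => Real.sqrt (1 + 4*H^2*x^2))) x
      = 4*H^2 / ((1+4*H^2*x^2) * Real.sqrt (1+4*H^2*x^2)) := by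
    intro x
    rw [hdβ]
    have hu : HasDerivAt (fun x : ℝ => 4*H^2*x) (4*H^2) x := by
      simpa using (hasDerivAt_id x).const_mul (4*H^2)
    have hd : HasDerivAt (fun x => 4*H^2*x / Real.sqrt (1+4*H^2*x^2))
        ((4*H^2 * Real.sqrt (1+4*H^2*x^2) - (4*H^2*x) * (4*H^2*x / Real.sqrt (1+4*H^2*x^2)))
          / (Real.sqrt (1+4*H^2*x^2))^2) x :=
      hu.div (hβ' x) (ne_of_gt (hsq x))
    rw [hd.deriv]
    have hs := Real.sq_sqrt (le_of_lt (hc x))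
    field_simp
    linear_combination 4*H^2*x^2 * hs
  have hθ' : ∀ x, deriv (fun x => Real.arctan (2 * H * x)) x = 2*H / (1+4*H^2*x^2) := by
    intro x
    have h1 : HasDerivAt (fun x : ℝ => 2*H*x) (2*H) x := by
      simpa using (hasDerivAt_id x).const_mul (2*H)
    have h2 : HasDerivAt (fun x => Real.arctan (2*H*x)) (1/(1+(2*H*x)^2)*(2*H)) x :=
      (Real.hasDerivAt_arctan (2*H*x)).comp x h1
    rw [h2.deriv]
    have : 1 + (2*H*x)^2 = 1 + 4*H^2*x^2 := by ring
    rw [this]; ring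
  have key : ∀ x, deriv (deriv (fun x => Real.sqrt (1 + 4*H^2*x^2))) x
      + Real.tan (Real.arctan (2*H*x)) * deriv (fun x => Real.arctan (2 * H * x)) x
        * deriv (fun x => Real.sqrt (1 + 4*H^2*x^2)) x
      - Real.sqrt (1 + 4*H^2*x^2) * (Real.cos (Real.arctan (2*H*x)))^2
      = (4*H^2 - 1) / Real.sqrt (1 + 4*H^2*x^2) := by
    intro x
    rw [hβ'' x, hdβ, hθ' x, Real.tan_arctan, Real.cos_arctan]
    have hs := Real.sq_sqrt (le_of_lt (hc x))
    have h1 : Real.sqrt (1 + (2*H*x)^2) = Real.sqrt (1 + 4*H^2*x^2) := by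
      ring_nf
    rw [h1]
    have hne := ne_of_gt (hsq x)
    have hne2 := ne_of_gt (hc x)
    field_simp
    linear_combination
  constructor
  · intro h
    have h0 := h 0
    rw [key 0] at h0
    simp at h0
    nlinarith [h0]
  · intro h x
    rw [key x]
    have : 4*H^2 - 1 = 0 := by nlinarith
    rw [this, zero_div]
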